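/- arXiv:2410.08039 — 4 statements merged into one kernel-verified Lean document; each statement's English description precedes it below -/
import Mathlib

section
/- Let N ≥ 1, 1 < p ≤ q < ∞, and let g, h : ℝ^N → (0,∞) be measurable functions, positive almost everywhere, with g ∈ L¹(ℝ^N \ {0}) and h^{1−p'} ∈ L¹_loc(ℝ^N). Define G(x) = ∫_{ℝ^N \ B(0,|x|)} g(y) dy and H(x) = ∫_{B(0,|x|)} h(y)^{1−p'} dy. If there is a constant C_H > 0 such that ( ∫_{ℝ^N} ( ∫_{B(0,|x|)} |f(y)| dy )^q g(x) dx )^{1/q} ≤ C_H ( ∫_{ℝ^N} |f(x)|^p h(x) dx )^{1/p} holds for all measurable f : ℝ^N → ℂ, then D₁ := sup_{x ≠ 0} G(x)^{1/q} H(x)^{1/p'} ≤ C_H; in particular D₁ < ∞. -/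
open MeasureTheory Metric ENNReal

/-- necessity part of the integral Hardy inequality on ℝ^N
(Euclidean case of homogeneous Lie groups, Q = N). -/
theorem integral_hardy_inequality_necessity
    (N : ℕ) (hN : 1 ≤ N) (p q p' : ℝ) (hp : 1 < p) (hpq : p ≤ q)
    (hp' : p' = p / (p - 1))
    (g h : EuclideanSpace ℝ (Fin N) → ℝ)
    (hg_meas : Measurable g) (hh_meas : Measurable h)
    (hg_pos : ∀ᵐ x, 0 < g x) (hh_pos : ∀ᵐ x, 0 < h x)
    (hg_int : IntegrableOn g ({0}ᶜ) volume)
    (hh_loc : LocallyIntegrable (fun y => h y ^ (1 - p')) volume)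
    (G H : EuclideanSpace ℝ (Fin N) → ℝ≥0∞)
    (hG : ∀ x, G x = ∫⁻ y in (ball (0 : EuclideanSpace ℝ (Fin N)) ‖x‖)ᶜ,
        ENNReal.ofReal (g y))
    (hH : ∀ x, H x = ∫⁻ y in ball (0 : EuclideanSpace ℝ (Fin N)) ‖x‖,
        ENNReal.ofReal (h y ^ (1 - p')))
    (C_H : ℝ) (hC_H : 0 < C_H)
    (hineq : ∀ f : EuclideanSpace ℝ (Fin N) → ℂ, Measurable f →
      (∫⁻ x, (∫⁻ y in ball (0 : EuclideanSpace ℝ (Fin N)) ‖x‖,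
            ENNReal.ofReal ‖f y‖) ^ q * ENNReal.ofReal (g x)) ^ (1 / q)
        ≤ ENNReal.ofReal C_H *
          (∫⁻ x, ENNReal.ofReal ‖f x‖ ^ p * ENNReal.ofReal (h x)) ^ (1 / p)) :
    (⨆ x : {x : EuclideanSpace ℝ (Fin N) // x ≠ 0},
        G x.1 ^ (1 / q) * H x.1 ^ (1 / p')) ≤ ENNReal.ofReal C_H ∧
    (⨆ x : {x : EuclideanSpace ℝ (Fin N) // x ≠ 0},
        G x.1 ^ (1 / q) * H x.1 ^ (1 / p')) < ∞ := by
  have hq1 : 1 < q := hp.trans_le hpq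
  have hq0 : (0:ℝ) < q := by linarith
  have hp0 : (0:ℝ) < p := by linarith
  have hp1 : (0:ℝ) < p - 1 := by linarith
  have hp'pos : 0 < p' := by rw [hp']; exact div_pos hp0 hp1
  have key : ∀ x : EuclideanSpace ℝ (Fin N), x ≠ 0 →
      G x ^ (1 / q) * H x ^ (1 / p') ≤ ENNReal.ofReal C_H := by
    intro x hx
    set R : ℝ := ‖x‖ with hR
    have hRpos : 0 < R := norm_pos_iff.mpr hx
    set B : Set (EuclideanSpace ℝ (Fin N)) := ball (0 : EuclideanSpace ℝ (Fin N)) R with hB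
    set φ : EuclideanSpace ℝ (Fin N) → ℝ := B.indicator (fun y => h y ^ (1 - p')) with hφ
    set f : EuclideanSpace ℝ (Fin N) → ℂ := fun y => (φ y : ℂ) with hf
    have hφ_meas : Measurable φ := by
      rw [hφ, hB]
      exact (hh_meas.pow measurable_const).indicator measurableSet_ball
    have hf_meas : Measurable f := Complex.measurable_ofReal.comp hφ_meas
    set A : ℝ≥0∞ := H x with hA
    -- A is finite
    have hAfin : A ≠ ∞ := by
      have hint : IntegrableOn (fun y => h y ^ (1 - p')) (closedBall (0:EuclideanSpace ℝ (Fin N)) R) volume :=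
        hh_loc.integrableOn_isCompact (isCompact_closedBall 0 R)
      have hfin : (∫⁻ y in closedBall (0:EuclideanSpace ℝ (Fin N)) R, ↑‖h y ^ (1 - p')‖₊) < ∞ :=
        hint.2
      have hle : A ≤ ∫⁻ y in closedBall (0:EuclideanSpace ℝ (Fin N)) R, ↑‖h y ^ (1 - p')‖₊ := by
        rw [hA, hH, ← hR]
        refine le_trans (lintegral_mono_set ball_subset_closedBall) ?_
        refine lintegral_mono fun y => ?_
        rw [← ENNReal.ofReal_coe_nnreal, coe_nnnorm]
        exact ENNReal.ofReal_le_ofReal (le_abs_self _)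
      exact (hle.trans_lt hfin).ne
    -- norm of f on the ball, a.e.
    have hexp : (1 - p') * p + 1 = 1 - p' := by
      rw [hp']; field_simp; ring
    -- RHS integral equals A
    have hRHS : (∫⁻ y, ENNReal.ofReal ‖f y‖ ^ p * ENNReal.ofReal (h y)) = A := by
      have hcongr : (fun y => ENNReal.ofReal ‖f y‖ ^ p * ENNReal.ofReal (h y))
          =ᵐ[volume] B.indicator (fun y => ENNReal.ofReal (h y ^ (1 - p'))) := by
        filter_upwards [hh_pos] with y hy
        by_cases hyB : y ∈ B
        · have hφy : φ y = h y ^ (1 - p') := Set.indicator_of_mem hyB _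
          have hpow : (0:ℝ) < h y ^ (1 - p') := Real.rpow_pos_of_pos hy _
          rw [Set.indicator_of_mem hyB]
          rw [hf]
          simp only [Complex.norm_real, Real.norm_eq_abs, hφy, abs_of_pos hpow]
          rw [ENNReal.ofReal_rpow_of_pos hpow,
            ← ENNReal.ofReal_mul (by positivity)]
          congr 1
          calc (h y ^ (1 - p')) ^ p * h y
              = h y ^ ((1 - p') * p) * h y ^ (1:ℝ) := by
                rw [← Real.rpow_mul hy.le, Real.rpow_one]
            _ = h y ^ ((1 - p') * p + 1) := (Real.rpow_add hy _ _).symm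
            _ = h y ^ (1 - p') := by rw [hexp]
        · have hφy : φ y = 0 := Set.indicator_of_notMem hyB _
          rw [Set.indicator_of_notMem hyB, hf]
          simp only [hφy, Complex.ofReal_zero, norm_zero, ENNReal.ofReal_zero]
          rw [ENNReal.zero_rpow_of_pos hp0, zero_mul]
      rw [lintegral_congr_ae hcongr,
        lintegral_indicator (hB ▸ measurableSet_ball : MeasurableSet B) _, hA, hH, ← hR, ← hB]
    -- inner integral on the ball equals A (as a set integral over B)
    have hInner : (∫⁻ y in B, ENNReal.ofReal ‖f y‖) = A := by
      have hcongr : ∀ᵐ y ∂(volume.restrict B),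
          ENNReal.ofReal ‖f y‖ = ENNReal.ofReal (h y ^ (1 - p')) := by
        filter_upwards [ae_restrict_mem (hB ▸ measurableSet_ball : MeasurableSet B), ae_restrict_of_ae hh_pos]
          with y hyB hy
        have hφy : φ y = h y ^ (1 - p') := Set.indicator_of_mem hyB _
        have hpow : (0:ℝ) < h y ^ (1 - p') := Real.rpow_pos_of_pos hy _
        rw [hf]
        simp only [Complex.norm_real, Real.norm_eq_abs, hφy, abs_of_pos hpow]
      rw [lintegral_congr_ae hcongr, hA, hH, ← hR, ← hB]
    -- lower bound of LHS
    have hLHS : A * (G x) ^ (1 / q)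
        ≤ (∫⁻ y, (∫⁻ z in ball (0 : EuclideanSpace ℝ (Fin N)) ‖y‖, ENNReal.ofReal ‖f z‖) ^ q
            * ENNReal.ofReal (g y)) ^ (1 / q) := by
      have h1 : A ^ q * G x
          ≤ ∫⁻ y, (∫⁻ z in ball (0 : EuclideanSpace ℝ (Fin N)) ‖y‖, ENNReal.ofReal ‖f z‖) ^ q
              * ENNReal.ofReal (g y) := by
        have h2 : A ^ q * G x
            = ∫⁻ y in Bᶜ, A ^ q * ENNReal.ofReal (g y) := by
          rw [hG, ← hR, ← hB, lintegral_const_mul' _ _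
            (ENNReal.rpow_ne_top_of_nonneg hq0.le hAfin)]
        rw [h2]
        refine le_trans (setLIntegral_mono' (hB ▸ measurableSet_ball : MeasurableSet B).compl
          fun y hy => ?_) (setLIntegral_le_lintegral _ _)
        have hRy : R ≤ ‖y‖ := by
          by_contra hc
          push_neg at hc
          exact hy (hB ▸ mem_ball_zero_iff.mpr hc)
        have hsub : B ⊆ ball (0 : EuclideanSpace ℝ (Fin N)) ‖y‖ := hB ▸ ball_subset_ball hRy
        have : A ≤ ∫⁻ z in ball (0 : EuclideanSpace ℝ (Fin N)) ‖y‖, ENNReal.ofReal ‖f z‖ := by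
          rw [← hInner]; exact lintegral_mono_set hsub
        exact mul_le_mul_left (ENNReal.rpow_le_rpow this hq0.le) _
      calc A * (G x) ^ (1 / q) = (A ^ q * G x) ^ (1 / q) := by
            rw [ENNReal.mul_rpow_of_nonneg _ _ (by positivity : (0:ℝ) ≤ 1 / q),
              ← ENNReal.rpow_mul, mul_one_div_cancel hq0.ne', ENNReal.rpow_one]
        _ ≤ _ := ENNReal.rpow_le_rpow h1 (by positivity)
    have hmain : A * (G x) ^ (1 / q) ≤ ENNReal.ofReal C_H * A ^ (1 / p) := by
      refine hLHS.trans ?_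
      have := hineq f hf_meas
      rwa [hRHS] at this
    -- conclude
    by_cases hA0 : A = 0
    · rw [hA, hA0] at *
      rw [ENNReal.zero_rpow_of_pos (by positivity : (0:ℝ) < 1 / p'), mul_zero]
      exact zero_le
    · have hc0 : A ^ (1 / p) ≠ 0 := by
        simp [ENNReal.rpow_eq_zero_iff, hA0, hAfin]
      have hct : A ^ (1 / p) ≠ ∞ :=
        ENNReal.rpow_ne_top_of_nonneg (by positivity) hAfin
      rw [← ENNReal.mul_le_mul_iff_left hc0 hct]
      have hsum : 1 / p' + 1 / p = 1 := by
        rw [hp']; field_simp; ring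
      calc G x ^ (1 / q) * A ^ (1 / p') * A ^ (1 / p)
          = G x ^ (1 / q) * (A ^ (1 / p') * A ^ (1 / p)) := by ring
        _ = G x ^ (1 / q) * A := by
            rw [← ENNReal.rpow_add _ _ hA0 hAfin, hsum, ENNReal.rpow_one]
        _ = A * G x ^ (1 / q) := by ring
        _ ≤ ENNReal.ofReal C_H * A ^ (1 / p) := hmain
  refine ⟨iSup_le fun x => key x.1 x.2, ?_⟩
  exact lt_of_le_of_lt (iSup_le fun x => key x.1 x.2) ENNReal.ofReal_lt_top
end

section
/- Let N ≥ 1, p > 1, s > 0 with sp > N, and let p' = p/(p−1). Then sup_{x ≠ 0} [ ( ∫_{ℝ^N \ B(0,|x|)} dy / ( |B(0,|y|)|^p |y|^{sp} ) )^{1/p} ( ∫_{B(0,|x|)} |y|^{sp'} dy )^{1/p'} ] = N (p−1)^{1/p'} / ( sp + Np − N ); in particular, multiplying this quantity by (p')^{1/p'} p^{1/p} gives Np / (sp + Np − N), which is strictly less than 1. -/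
open Set Function Metric MeasureTheory Module
open scoped ENNReal
open Set Function Metric MeasureTheory Module
open scoped ENNReal

lemma lintegral_fun_norm_addHaar' {E : Type*} [NormedAddCommGroup E] [NormedSpace ℝ E]
    [MeasurableSpace E] [BorelSpace E] [Nontrivial E] [FiniteDimensional ℝ E]
    (μ : Measure E) [μ.IsAddHaarMeasure] (f : ℝ → ℝ≥0∞) (hf : Measurable f) :
    ∫⁻ x, f ‖x‖ ∂μ = (finrank ℝ E : ℝ≥0∞) * μ (ball 0 1) *
      ∫⁻ y in Ioi (0:ℝ), ENNReal.ofReal (y ^ (finrank ℝ E - 1)) * f y := by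
  have hmeas : Measurable ((f ∘ Subtype.val) ∘
      (Prod.snd : sphere (0:E) 1 × Ioi (0:ℝ) → Ioi (0:ℝ))) :=
    (hf.comp measurable_subtype_coe).comp measurable_snd
  calc
    ∫⁻ x, f ‖x‖ ∂μ = ∫⁻ x : ({(0)}ᶜ : Set E), f ‖x.1‖ ∂(μ.comap (↑)) := by
      rw [lintegral_subtype_comap (measurableSet_singleton _).compl fun x ↦ f ‖x‖,
        MeasureTheory.restrict_compl_singleton]
    _ = ∫⁻ x : sphere (0 : E) 1 × Ioi (0 : ℝ), ((f ∘ Subtype.val) ∘ Prod.snd) x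
          ∂μ.toSphere.prod (.volumeIoiPow (finrank ℝ E - 1)) :=
      by rw [← μ.measurePreserving_homeomorphUnitSphereProd.lintegral_comp hmeas]
         congr 1; ext x; simp
    _ = μ.toSphere univ * ∫⁻ y : Ioi (0:ℝ), f y ∂(Measure.volumeIoiPow (finrank ℝ E - 1)) := by
      rw [MeasureTheory.lintegral_prod _ hmeas.aemeasurable]
      simp [lintegral_const, mul_comm]
    _ = _ := by
      rw [Measure.toSphere_apply_univ, Measure.volumeIoiPow,
        lintegral_withDensity_eq_lintegral_mul _
          (by exact (measurable_subtype_coe.pow_const _).ennreal_ofReal)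
          (show Measurable fun (y : Ioi (0:ℝ)) => f ↑y from hf.comp measurable_subtype_coe),
        mul_assoc]
      simp only [Pi.mul_apply]
      rw [lintegral_subtype_comap measurableSet_Ioi
          (fun a : ℝ ↦ ENNReal.ofReal (a ^ (finrank ℝ E - 1)) * f a), mul_assoc]

lemma oneD_ball {r q : ℝ} (hr : 0 < r) (hq : -1 < q) :
    ∫⁻ t in Ioo (0:ℝ) r, ENNReal.ofReal (t ^ q) = ENNReal.ofReal (r ^ (q+1) / (q+1)) := by
  have hint : IntegrableOn (fun t : ℝ => t ^ q) (Ioo 0 r) := by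
    have := (intervalIntegral.intervalIntegrable_rpow' (a := 0) (b := r) hq).1
    exact this.mono_set Ioo_subset_Ioc_self
  rw [← ofReal_integral_eq_lintegral_ofReal hint ?nn]
  case nn =>
    filter_upwards [ae_restrict_mem measurableSet_Ioo] with t ht
    exact Real.rpow_nonneg ht.1.le q
  congr 1
  rw [setIntegral_congr_set Ioo_ae_eq_Ioc, ← intervalIntegral.integral_of_le hr.le,
    integral_rpow (Or.inl hq), Real.zero_rpow (by linarith), sub_zero]

lemma oneD_Ioi {r a : ℝ} (hr : 0 < r) (ha : a < -1) :
    ∫⁻ t in Ici r, ENNReal.ofReal (t ^ a) = ENNReal.ofReal (r ^ (a+1) / (-(a+1))) := by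
  rw [MeasureTheory.Measure.restrict_congr_set MeasureTheory.Ioi_ae_eq_Ici.symm,
    ← ofReal_integral_eq_lintegral_ofReal (integrableOn_Ioi_rpow_of_lt ha hr) ?nn]
  case nn =>
    filter_upwards [ae_restrict_mem measurableSet_Ioi] with t ht
    exact Real.rpow_nonneg (hr.trans ht).le a
  rw [integral_Ioi_rpow_of_lt ha hr]
  rw [show (-(a+1)) = -1 + -a by ring, neg_div, ← div_neg]
  ring_nf
lemma lintegral_norm_ball {E : Type*} [NormedAddCommGroup E] [NormedSpace ℝ E]
    [MeasurableSpace E] [BorelSpace E] [Nontrivial E] [FiniteDimensional ℝ E]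
    (μ : Measure E) [μ.IsAddHaarMeasure] (g : ℝ → ℝ≥0∞) (hg : Measurable g) (r : ℝ) :
    ∫⁻ y in ball (0:E) r, g ‖y‖ ∂μ = (finrank ℝ E : ℝ≥0∞) * μ (ball 0 1) *
      ∫⁻ t in Ioo (0:ℝ) r, ENNReal.ofReal (t ^ (finrank ℝ E - 1)) * g t := by
  calc
    ∫⁻ y in ball (0:E) r, g ‖y‖ ∂μ = ∫⁻ y, ((Iio r).indicator g) ‖y‖ ∂μ := by
      rw [← lintegral_indicator measurableSet_ball]
      congr 1; ext y
      by_cases h : ‖y‖ < r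
      · rw [Set.indicator_of_mem (mem_ball_zero_iff.2 h),
          Set.indicator_of_mem (show ‖y‖ ∈ Iio r from h)]
      · rw [Set.indicator_of_notMem (fun hy => h (mem_ball_zero_iff.1 hy)),
          Set.indicator_of_notMem (show ‖y‖ ∉ Iio r from h)]
    _ = (finrank ℝ E : ℝ≥0∞) * μ (ball 0 1) *
        ∫⁻ t in Ioi (0:ℝ), ENNReal.ofReal (t ^ (finrank ℝ E - 1)) * (Iio r).indicator g t :=
      lintegral_fun_norm_addHaar' μ _ (hg.indicator measurableSet_Iio)
    _ = _ := by
      congr 1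
      rw [show (fun t => ENNReal.ofReal (t ^ (finrank ℝ E - 1)) * (Iio r).indicator g t)
          = fun t => (Iio r).indicator
              (fun t => ENNReal.ofReal (t ^ (finrank ℝ E - 1)) * g t) t by
        ext t
        by_cases h : t ∈ Iio r
        · rw [Set.indicator_of_mem h, Set.indicator_of_mem h]
        · rw [Set.indicator_of_notMem h, Set.indicator_of_notMem h, mul_zero]]
      rw [lintegral_indicator measurableSet_Iio, Measure.restrict_restrict measurableSet_Iio,
        Set.Iio_inter_Ioi]

lemma lintegral_norm_ball_compl {E : Type*} [NormedAddCommGroup E] [NormedSpace ℝ E]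
    [MeasurableSpace E] [BorelSpace E] [Nontrivial E] [FiniteDimensional ℝ E]
    (μ : Measure E) [μ.IsAddHaarMeasure] (g : ℝ → ℝ≥0∞) (hg : Measurable g)
    {r : ℝ} (hr : 0 < r) :
    ∫⁻ y in (ball (0:E) r)ᶜ, g ‖y‖ ∂μ = (finrank ℝ E : ℝ≥0∞) * μ (ball 0 1) *
      ∫⁻ t in Ici r, ENNReal.ofReal (t ^ (finrank ℝ E - 1)) * g t := by
  calc
    ∫⁻ y in (ball (0:E) r)ᶜ, g ‖y‖ ∂μ = ∫⁻ y, ((Ici r).indicator g) ‖y‖ ∂μ := by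
      rw [← lintegral_indicator measurableSet_ball.compl]
      congr 1; ext y
      by_cases h : r ≤ ‖y‖
      · rw [Set.indicator_of_mem (show y ∈ (ball (0:E) r)ᶜ from
            fun hy => (mem_ball_zero_iff.1 hy).not_ge h),
          Set.indicator_of_mem (show ‖y‖ ∈ Ici r from h)]
      · rw [Set.indicator_of_notMem (show y ∉ (ball (0:E) r)ᶜ from
            fun hy => hy (mem_ball_zero_iff.2 (not_le.1 h))),
          Set.indicator_of_notMem (show ‖y‖ ∉ Ici r from h)]
    _ = (finrank ℝ E : ℝ≥0∞) * μ (ball 0 1) *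
        ∫⁻ t in Ioi (0:ℝ), ENNReal.ofReal (t ^ (finrank ℝ E - 1)) * (Ici r).indicator g t :=
      lintegral_fun_norm_addHaar' μ _ (hg.indicator measurableSet_Ici)
    _ = _ := by
      congr 1
      rw [show (fun t => ENNReal.ofReal (t ^ (finrank ℝ E - 1)) * (Ici r).indicator g t)
          = fun t => (Ici r).indicator
              (fun t => ENNReal.ofReal (t ^ (finrank ℝ E - 1)) * g t) t by
        ext t
        by_cases h : t ∈ Ici r
        · rw [Set.indicator_of_mem h, Set.indicator_of_mem h]
        · rw [Set.indicator_of_notMem h, Set.indicator_of_notMem h, mul_zero]]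
      rw [lintegral_indicator measurableSet_Ici, Measure.restrict_restrict measurableSet_Ici,
        show Ici r ∩ Ioi 0 = Ici r from
          Set.inter_eq_self_of_subset_left fun t ht => mem_Ioi.2 (hr.trans_le ht)]
lemma key_real (N : ℕ) (hN : 1 ≤ N) (p p' s v r : ℝ) (hp : 1 < p) (hs : 0 < s)
    (hsp : (N : ℝ) < s * p) (hp' : p' = p / (p - 1)) (hv : 0 < v) (hr : 0 < r) :
    ((N : ℝ) * (v * (v ^ (-p) * (r ^ (-(s*p+N*p-N)) / (s*p+N*p-N))))) ^ (1/p) *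
      ((N : ℝ) * (v * (r ^ ((N:ℝ)+s*p') / ((N:ℝ)+s*p')))) ^ (1/p')
      = (N : ℝ) * (p-1) ^ (1/p') / (s*p+N*p-N) := by
  have hp0 : 0 < p := by linarith
  have hp1 : 0 < p - 1 := by linarith
  have hN0 : (0:ℝ) < N := by exact_mod_cast Nat.pos_of_ne_zero (by omega)
  have hT : 0 < s*p+N*p-N := by nlinarith
  have hp'v : 1/p' = (p-1)/p := by rw [hp', one_div_div]
  have hp'0 : 0 < p' := by rw [hp']; positivity
  have hE2 : (N:ℝ) + s*p' = (s*p+N*p-N)/(p-1) := by rw [hp']; field_simp; ring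
  have hE2pos : 0 < (N:ℝ) + s*p' := by rw [hE2]; positivity
  set T := s*p+N*p-N with hTdef
  have hL1 : (0:ℝ) < (N : ℝ) * (v * (v ^ (-p) * (r ^ (-T) / T))) := by positivity
  have hL2 : (0:ℝ) < (N : ℝ) * (v * (r ^ ((N:ℝ)+s*p') / ((N:ℝ)+s*p'))) := by positivity
  have hLHS : (0:ℝ) < ((N : ℝ) * (v * (v ^ (-p) * (r ^ (-T) / T)))) ^ (1/p) *
      ((N : ℝ) * (v * (r ^ ((N:ℝ)+s*p') / ((N:ℝ)+s*p')))) ^ (1/p') := by positivity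
  have hRHS : (0:ℝ) < (N : ℝ) * (p-1) ^ (1/p') / T := by positivity
  apply Real.log_injOn_pos (Set.mem_Ioi.2 hLHS) (Set.mem_Ioi.2 hRHS)
  have l1 : Real.log ((N:ℝ) * (v * (v ^ (-p) * (r ^ (-T) / T))))
      = Real.log N + Real.log v + (-p) * Real.log v + ((-T) * Real.log r - Real.log T) := by
    rw [Real.log_mul (by positivity) (by positivity), Real.log_mul (by positivity) (by positivity),
        Real.log_mul (by positivity) (by positivity), Real.log_div (by positivity) (by positivity),
        Real.log_rpow hv, Real.log_rpow hr]
    ring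
  have l2 : Real.log ((N:ℝ) * (v * (r ^ ((N:ℝ)+s*p') / ((N:ℝ)+s*p'))))
      = Real.log N + Real.log v + (T/(p-1)) * Real.log r - (Real.log T - Real.log (p-1)) := by
    rw [hE2, Real.log_mul (by positivity) (by positivity),
        Real.log_mul (by positivity) (by positivity),
        Real.log_div (by positivity) (by positivity),
        Real.log_div (by positivity) (by positivity), Real.log_rpow hr]
    ring
  have lr : Real.log ((N:ℝ) * (p-1) ^ (1/p') / T)
      = Real.log N + (1/p') * Real.log (p-1) - Real.log T := by
    rw [Real.log_div (by positivity) (by positivity),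
        Real.log_mul (by positivity) (by positivity), Real.log_rpow hp1]
  rw [Real.log_mul (by positivity) (by positivity), Real.log_rpow hL1, Real.log_rpow hL2,
      l1, l2, lr, hp'v]
  field_simp
  ring

open MeasureTheory Metric ENNReal

/-- explicit evaluation of the constant D₁ in the fractional Hardy
inequality with a ≡ 1 on ℝ^N, for the range sp > N; in particular multiplying
it by (p')^{1/p'} p^{1/p} gives Np/(sp+Np−N) < 1. -/
theorem fractional_hardy_constant_evaluation
    (N : ℕ) (hN : 1 ≤ N) (p p' s : ℝ) (hp : 1 < p) (hs : 0 < s)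
    (hsp : (N : ℝ) < s * p) (hp' : p' = p / (p - 1)) :
    (⨆ x : {x : EuclideanSpace ℝ (Fin N) // x ≠ 0},
        (∫⁻ y in (ball (0 : EuclideanSpace ℝ (Fin N)) ‖x.1‖)ᶜ,
            1 / (volume (ball (0 : EuclideanSpace ℝ (Fin N)) ‖y‖) ^ p *
              ENNReal.ofReal ‖y‖ ^ (s * p))) ^ (1 / p) *
        (∫⁻ y in ball (0 : EuclideanSpace ℝ (Fin N)) ‖x.1‖,
            ENNReal.ofReal ‖y‖ ^ (s * p')) ^ (1 / p'))
      = ENNReal.ofReal ((N : ℝ) * (p - 1) ^ (1 / p') / (s * p + N * p - N)) ∧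
    (N : ℝ) * (p - 1) ^ (1 / p') / (s * p + N * p - N) * (p' ^ (1 / p') * p ^ (1 / p))
      = (N : ℝ) * p / (s * p + N * p - N) ∧
    (N : ℝ) * p / (s * p + N * p - N) < 1 := by
  have hp0 : 0 < p := by linarith
  have hp1 : 0 < p - 1 := by linarith
  have hN0 : (0:ℝ) < N := by exact_mod_cast Nat.pos_of_ne_zero (by omega)
  have hN1 : (1:ℝ) ≤ N := by exact_mod_cast hN
  have hT : 0 < s * p + N * p - N := by nlinarith
  have hp'0 : 0 < p' := by rw [hp']; positivity
  have hpp' : 1 / p' + 1 / p = 1 := by rw [hp', one_div_div]; field_simp; ring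
  refine ⟨?_, ?_, ?_⟩
  · -- main evaluation
    haveI hnt : Nontrivial (EuclideanSpace ℝ (Fin N)) := nontrivial_of_finrank_pos
      (by rw [finrank_euclideanSpace_fin]; omega)
    have hfr : finrank ℝ (EuclideanSpace ℝ (Fin N)) = N := finrank_euclideanSpace_fin
    set V := volume (ball (0 : EuclideanSpace ℝ (Fin N)) 1) with hV
    have hV0 : V ≠ 0 := (measure_ball_pos _ _ one_pos).ne'
    have hVtop : V ≠ ⊤ := measure_ball_lt_top.ne
    set v := V.toReal with hvdef
    have hv : 0 < v := ENNReal.toReal_pos hV0 hVtop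
    have hVv : V = ENNReal.ofReal v := (ENNReal.ofReal_toReal hVtop).symm
    have hconst : ∀ x : {x : EuclideanSpace ℝ (Fin N) // x ≠ 0},
        (∫⁻ y in (ball (0 : EuclideanSpace ℝ (Fin N)) ‖x.1‖)ᶜ,
            1 / (volume (ball (0 : EuclideanSpace ℝ (Fin N)) ‖y‖) ^ p *
              ENNReal.ofReal ‖y‖ ^ (s * p))) ^ (1 / p) *
        (∫⁻ y in ball (0 : EuclideanSpace ℝ (Fin N)) ‖x.1‖,
            ENNReal.ofReal ‖y‖ ^ (s * p')) ^ (1 / p')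
        = ENNReal.ofReal ((N : ℝ) * (p - 1) ^ (1 / p') / (s * p + N * p - N)) := by
      rintro ⟨x, hx⟩
      have hr : 0 < ‖x‖ := norm_pos_iff.2 hx
      set r := ‖x‖
      -- second integral
      have hg₂ : Measurable fun t : ℝ => ENNReal.ofReal t ^ (s * p') :=
        ENNReal.continuous_rpow_const.measurable.comp ENNReal.measurable_ofReal
      have hI₂ : (∫⁻ y in ball (0 : EuclideanSpace ℝ (Fin N)) r,
            ENNReal.ofReal ‖y‖ ^ (s * p'))
          = (N : ℝ≥0∞) * V * ENNReal.ofReal (r ^ ((N:ℝ) + s * p') / ((N:ℝ) + s * p')) := by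
        rw [lintegral_norm_ball volume _ hg₂ r, hfr]
        congr 1
        rw [setLIntegral_congr_fun measurableSet_Ioo (
          (fun t (ht : t ∈ Ioo (0:ℝ) r) => by
            rw [ENNReal.ofReal_rpow_of_pos ht.1, ← ENNReal.ofReal_mul (pow_nonneg ht.1.le _),
              ← Real.rpow_natCast t (N-1), Nat.cast_sub hN, Nat.cast_one,
              ← Real.rpow_add ht.1])),
          oneD_ball hr (by have h2 := mul_pos hs hp'0; linarith),
          show ((N:ℝ) - 1 + s * p') + 1 = (N:ℝ) + s * p' by ring]
      -- first integral
      have hmono : Monotone fun t : ℝ => volume (ball (0 : EuclideanSpace ℝ (Fin N)) t) :=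
        fun a b hab => measure_mono (ball_subset_ball hab)
      have hg₁ : Measurable fun t : ℝ =>
          1 / (volume (ball (0 : EuclideanSpace ℝ (Fin N)) t) ^ p *
            ENNReal.ofReal t ^ (s * p)) := by
        simp only [one_div]
        exact ((ENNReal.continuous_rpow_const.measurable.comp hmono.measurable).mul
          (ENNReal.continuous_rpow_const.measurable.comp ENNReal.measurable_ofReal)).inv
      have ha : (N:ℝ) - 1 - ((N:ℝ) * p + s * p) < -1 := by nlinarith
      have hI₁ : (∫⁻ y in (ball (0 : EuclideanSpace ℝ (Fin N)) r)ᶜ,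
            1 / (volume (ball (0 : EuclideanSpace ℝ (Fin N)) ‖y‖) ^ p *
              ENNReal.ofReal ‖y‖ ^ (s * p)))
          = (N : ℝ≥0∞) * V * (ENNReal.ofReal (v ^ (-p)) *
              ENNReal.ofReal (r ^ (-(s * p + (N:ℝ) * p - N)) / (s * p + (N:ℝ) * p - N))) := by
        rw [lintegral_norm_ball_compl volume _ hg₁ hr, hfr]
        congr 1
        rw [setLIntegral_congr_fun measurableSet_Ici (
          (fun t (ht : t ∈ Ici r) => by
            have ht0 : 0 < t := hr.trans_le ht
            show ENNReal.ofReal (t ^ (N-1)) *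
                (1 / (volume (ball (0 : EuclideanSpace ℝ (Fin N)) t) ^ p *
                  ENNReal.ofReal t ^ (s * p)))
              = ENNReal.ofReal (v ^ (-p)) *
                ENNReal.ofReal (t ^ ((N:ℝ) - 1 - ((N:ℝ) * p + s * p)))
            rw [Measure.addHaar_ball_of_pos volume (0 : EuclideanSpace ℝ (Fin N)) ht0, hfr,
              ← hV, hVv, ← ENNReal.ofReal_mul (by positivity),
              ENNReal.ofReal_rpow_of_pos (by positivity),
              ENNReal.ofReal_rpow_of_pos ht0, ← ENNReal.ofReal_mul (by positivity),
              one_div, ← ENNReal.ofReal_inv_of_pos (by positivity),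
              ← ENNReal.ofReal_mul (by positivity), ← ENNReal.ofReal_mul (by positivity)]
            congr 1
            have hsplit : t ^ ((N:ℝ) - 1 - ((N:ℝ) * p + s * p))
                = t ^ ((N:ℝ) - 1) * (t ^ ((N:ℝ) * p))⁻¹ * (t ^ (s * p))⁻¹ := by
              rw [← Real.rpow_neg ht0.le, ← Real.rpow_neg ht0.le, ← Real.rpow_add ht0,
                ← Real.rpow_add ht0]
              congr 1; ring
            rw [← Real.rpow_natCast t (N-1), ← Real.rpow_natCast t N, Nat.cast_sub hN,
              Nat.cast_one, Real.mul_rpow (by positivity) hv.le, ← Real.rpow_mul ht0.le,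
              Real.rpow_neg hv.le, hsplit]
            ring)),
          lintegral_const_mul' _ _ ENNReal.ofReal_ne_top, oneD_Ioi hr ha,
          show ((N:ℝ) - 1 - ((N:ℝ) * p + s * p)) + 1 = -(s * p + (N:ℝ) * p - N) by ring,
          neg_neg]
      rw [hI₁, hI₂, hVv, ← ENNReal.ofReal_natCast, ← ENNReal.ofReal_mul (by positivity),
        ← ENNReal.ofReal_mul (by positivity), ← ENNReal.ofReal_mul (by positivity),
        ← ENNReal.ofReal_mul (by positivity),
        ENNReal.ofReal_rpow_of_pos (by positivity), ENNReal.ofReal_rpow_of_pos (by positivity),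
        ← ENNReal.ofReal_mul (by positivity)]
      congr 1
      rw [show (N:ℝ) * v * (v ^ (-p) * (r ^ (-(s * p + (N:ℝ) * p - N)) / (s * p + (N:ℝ) * p - N)))
            = (N:ℝ) * (v * (v ^ (-p) * (r ^ (-(s * p + (N:ℝ) * p - N)) / (s * p + (N:ℝ) * p - N))))
          by ring,
        show (N:ℝ) * v * (r ^ ((N:ℝ) + s * p') / ((N:ℝ) + s * p'))
            = (N:ℝ) * (v * (r ^ ((N:ℝ) + s * p') / ((N:ℝ) + s * p'))) by ring]
      exact key_real N hN p p' s v r hp hs hsp hp' hv hr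
    haveI : Nonempty {x : EuclideanSpace ℝ (Fin N) // x ≠ 0} := by
      obtain ⟨z, hz⟩ := exists_ne (0 : EuclideanSpace ℝ (Fin N))
      exact ⟨⟨z, hz⟩⟩
    rw [iSup_congr hconst, iSup_const]
  · -- second part
    have hkey : (p-1) ^ (1/p') * (p' ^ (1/p') * p ^ (1/p)) = p := by
      rw [← mul_assoc, ← Real.mul_rpow (by linarith) hp'0.le,
        show (p-1) * p' = p by rw [hp']; field_simp,
        ← Real.rpow_add hp0, hpp', Real.rpow_one]
    calc (N:ℝ) * (p-1) ^ (1/p') / (s*p+N*p-N) * (p' ^ (1/p') * p ^ (1/p))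
        = (N:ℝ) * ((p-1) ^ (1/p') * (p' ^ (1/p') * p ^ (1/p))) / (s*p+N*p-N) := by ring
      _ = (N:ℝ) * p / (s*p+N*p-N) := by rw [hkey]
  · rw [div_lt_one hT]
    linarith
end

section
/- Let N ≥ 1 and 1 < p < q < ∞. Let u ∈ L^p(ℝ^N) ∩ L^q(ℝ^N) with u not identically zero. Then ∫_{ℝ^N} ( |u(x)|^p / ‖u‖_{L^p}^p ) log( |u(x)|^p / ‖u‖_{L^p}^p ) dx ≤ ( q/(q−p) ) log( ‖u‖_{L^q}^p / ‖u‖_{L^p}^p ). -/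
open MeasureTheory Metric ENNReal

/-- Key pointwise inequality: for `a > 1`, `H > 0`, `t ≥ 0`,
`(a-1) t log t ≤ t log H - t + t^a / H`. -/
lemma log_holder_key_pt {a H t : ℝ} (ha : 1 < a) (hH : 0 < H) (ht : 0 ≤ t) :
    (a - 1) * (t * Real.log t) ≤ t * Real.log H - t + t ^ a / H := by
  rcases eq_or_lt_of_le ht with h0 | h0
  · simp [← h0, Real.zero_rpow (by positivity : a ≠ 0)]
  · have hx : 0 < t ^ (a - 1) / H := by positivity
    have hlog := Real.log_le_sub_one_of_pos hx
    rw [Real.log_div (by positivity) hH.ne', Real.log_rpow h0] at hlog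
    have h2 : t * ((a - 1) * Real.log t - Real.log H) ≤ t * (t ^ (a - 1) / H - 1) :=
      mul_le_mul_of_nonneg_left hlog ht
    have h3 : t * t ^ (a - 1) = t ^ a := by
      rw [mul_comm, ← Real.rpow_add_one h0.ne' (a - 1)]
      congr 1
      ring
    have h4 : t * (t ^ (a - 1) / H) = t ^ a / H := by
      rw [mul_div_assoc', h3]
    nlinarith [h2]

/-- Positive-part bound: `(a-1) t log t ≤ t^a` for `t ≥ 0`, `a > 1`. -/
lemma log_holder_pos_pt {a t : ℝ} (ha : 1 < a) (ht : 0 ≤ t) :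
    (a - 1) * (t * Real.log t) ≤ t ^ a := by
  have := log_holder_key_pt ha one_pos ht
  simp only [Real.log_one, mul_zero, zero_sub, div_one] at this
  linarith

/-- logarithmic Hölder inequality on ℝ^N.  The entropy integral
on the left-hand side (which may a priori be −∞) is encoded in `EReal` as the
difference of the lower integrals of the positive and negative parts of the
integrand. -/
theorem logarithmic_holder_inequality
    (N : ℕ) (hN : 1 ≤ N) (p q : ℝ) (hp : 1 < p) (hpq : p < q)
    (u : EuclideanSpace ℝ (Fin N) → ℂ)
    (hup : MemLp u (ENNReal.ofReal p) volume)
    (huq : MemLp u (ENNReal.ofReal q) volume)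
    (hu0 : ¬ u =ᵐ[volume] 0)
    (Ip Iq : ℝ)
    (hIp : Ip = ∫ x, ‖u x‖ ^ p) (hIq : Iq = ∫ x, ‖u x‖ ^ q) :
    ((∫⁻ x, ENNReal.ofReal
        ((‖u x‖ ^ p / Ip) * Real.log (‖u x‖ ^ p / Ip)) : ℝ≥0∞) : EReal)
      - ((∫⁻ x, ENNReal.ofReal
        (-((‖u x‖ ^ p / Ip) * Real.log (‖u x‖ ^ p / Ip))) : ℝ≥0∞) : EReal)
      ≤ (((q / (q - p)) * Real.log (Iq ^ (p / q) / Ip) : ℝ) : EReal) := by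
  have hp0 : (0:ℝ) < p := by linarith
  have hq0 : (0:ℝ) < q := by linarith
  set a : ℝ := q / p with ha_def
  have ha : 1 < a := (one_lt_div hp0).2 hpq
  have hpne0 : ENNReal.ofReal p ≠ 0 := by
    simp only [ne_eq, ENNReal.ofReal_eq_zero, not_le]; linarith
  have hqne0 : ENNReal.ofReal q ≠ 0 := by
    simp only [ne_eq, ENNReal.ofReal_eq_zero, not_le]; linarith
  have hf_int : Integrable (fun x => ‖u x‖ ^ p) volume := by
    have := hup.integrable_norm_rpow hpne0 ENNReal.ofReal_ne_top
    rwa [ENNReal.toReal_ofReal hp0.le] at this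
  have hg_int : Integrable (fun x => ‖u x‖ ^ q) volume := by
    have := huq.integrable_norm_rpow hqne0 ENNReal.ofReal_ne_top
    rwa [ENNReal.toReal_ofReal hq0.le] at this
  -- positivity of Ip and Iq
  have hIp_pos : 0 < Ip := by
    have hnn0 : (0:ℝ) ≤ ∫ x, ‖u x‖ ^ p := integral_nonneg fun x => Real.rpow_nonneg (norm_nonneg _) p
    rcases hnn0.lt_or_eq with h | h
    · rwa [hIp]
    · exfalso
      apply hu0
      have h0 := (integral_eq_zero_iff_of_nonneg
        (fun x => Real.rpow_nonneg (norm_nonneg _) p) hf_int).1 h.symm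
      filter_upwards [h0] with x hx
      have hnn : ‖u x‖ = 0 := by
        by_contra hne
        have hpos : (0:ℝ) < ‖u x‖ := lt_of_le_of_ne (norm_nonneg _) (Ne.symm hne)
        have : (0:ℝ) < ‖u x‖ ^ p := Real.rpow_pos_of_pos hpos p
        rw [Pi.zero_apply] at hx
        linarith
      simp only [Pi.zero_apply]
      exact norm_eq_zero.mp hnn
  have hIq_pos : 0 < Iq := by
    have hnn0 : (0:ℝ) ≤ ∫ x, ‖u x‖ ^ q := integral_nonneg fun x => Real.rpow_nonneg (norm_nonneg _) q
    rcases hnn0.lt_or_eq with h | h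
    · rwa [hIq]
    · exfalso
      apply hu0
      have h0 := (integral_eq_zero_iff_of_nonneg
        (fun x => Real.rpow_nonneg (norm_nonneg _) q) hg_int).1 h.symm
      filter_upwards [h0] with x hx
      have hnn : ‖u x‖ = 0 := by
        by_contra hne
        have hpos : (0:ℝ) < ‖u x‖ := lt_of_le_of_ne (norm_nonneg _) (Ne.symm hne)
        have : (0:ℝ) < ‖u x‖ ^ q := Real.rpow_pos_of_pos hpos q
        rw [Pi.zero_apply] at hx
        linarith
      simp only [Pi.zero_apply]
      exact norm_eq_zero.mp hnn
  set f : EuclideanSpace ℝ (Fin N) → ℝ := fun x => ‖u x‖ ^ p / Ip with hf_def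
  have hf_nonneg : ∀ x, 0 ≤ f x := fun x =>
    div_nonneg (Real.rpow_nonneg (norm_nonneg _) p) hIp_pos.le
  have hfI : Integrable f volume := hf_int.div_const Ip
  have hf_integral : ∫ x, f x = 1 := by
    simp only [hf_def]
    rw [integral_div, ← hIp, div_self hIp_pos.ne']
  have hfa : ∀ x, f x ^ a = ‖u x‖ ^ q / Ip ^ a := by
    intro x
    simp only [hf_def]
    rw [Real.div_rpow (Real.rpow_nonneg (norm_nonneg _) p) hIp_pos.le,
      ← Real.rpow_mul (norm_nonneg _)]
    congr 2
    rw [ha_def]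
    field_simp
  set H : ℝ := Iq / Ip ^ a with hH_def
  have hH_pos : 0 < H := div_pos hIq_pos (Real.rpow_pos_of_pos hIp_pos a)
  have hfun : (fun x => f x ^ a) = fun x => ‖u x‖ ^ q / Ip ^ a := funext hfa
  have hfa_int : Integrable (fun x => f x ^ a) volume := by
    rw [hfun]
    exact hg_int.div_const _
  have hfa_integral : ∫ x, f x ^ a = H := by
    rw [hfun, integral_div, ← hIq]
  set φ : EuclideanSpace ℝ (Fin N) → ℝ := fun x => f x * Real.log (f x) with hφ_def
  -- measurability
  have hu_m : AEMeasurable (fun x => ‖u x‖) volume := hup.1.norm.aemeasurable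
  have hf_m : AEMeasurable f volume := (hu_m.pow aemeasurable_const).div_const Ip
  have hφ_m : AEMeasurable φ volume := hf_m.mul (Real.measurable_log.comp_aemeasurable hf_m)
  set A : ℝ≥0∞ := ∫⁻ x, ENNReal.ofReal (φ x) with hA_def
  set B : ℝ≥0∞ := ∫⁻ x, ENNReal.ofReal (-φ x) with hB_def
  have ha1 : (0:ℝ) < a - 1 := by linarith
  have hψ_int : Integrable (fun x => f x ^ a / (a - 1)) volume := hfa_int.div_const _
  have hA_lt : A < ⊤ := by
    calc A ≤ ∫⁻ x, ENNReal.ofReal (f x ^ a / (a - 1)) := by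
          refine lintegral_mono fun x => ENNReal.ofReal_le_ofReal ?_
          have h : (a - 1) * φ x ≤ f x ^ a := log_holder_pos_pt ha (hf_nonneg x)
          rw [le_div_iff₀ ha1]
          linarith
      _ = ENNReal.ofReal (∫ x, f x ^ a / (a - 1)) :=
          (ofReal_integral_eq_lintegral_ofReal hψ_int
            (ae_of_all _ fun x => by positivity)).symm
      _ < ⊤ := ENNReal.ofReal_lt_top
  -- the goal is about A and B
  show ((A : EReal) - (B : EReal)) ≤ _
  by_cases hB : B = ⊤
  · rw [hB, EReal.coe_ennreal_top, sub_eq_add_neg, EReal.neg_top, EReal.add_bot]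
    exact bot_le
  · -- φ is integrable
    have h_abs : ∀ x, ENNReal.ofReal ‖φ x‖ = ENNReal.ofReal (φ x) + ENNReal.ofReal (-φ x) := by
      intro x
      rcases le_or_gt 0 (φ x) with h | h
      · rw [Real.norm_of_nonneg h, ENNReal.ofReal_of_nonpos (neg_nonpos.mpr h), add_zero]
      · rw [Real.norm_of_nonpos h.le, ENNReal.ofReal_of_nonpos h.le, zero_add]
    have hφ_int : Integrable φ volume := by
      refine ⟨hφ_m.aestronglyMeasurable, ?_⟩
      rw [hasFiniteIntegral_iff_norm]
      calc ∫⁻ x, ENNReal.ofReal ‖φ x‖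
          = ∫⁻ x, (ENNReal.ofReal (φ x) + ENNReal.ofReal (-φ x)) := by
            exact lintegral_congr h_abs
        _ = A + B := lintegral_add_left' (ENNReal.measurable_ofReal.comp_aemeasurable hφ_m) _
        _ < ⊤ := ENNReal.add_lt_top.2 ⟨hA_lt, lt_top_iff_ne_top.2 hB⟩
    have hint : ∫ x, φ x = A.toReal - B.toReal :=
      integral_eq_lintegral_pos_part_sub_lintegral_neg_part hφ_int
    -- rewrite LHS coercions
    have hAe : ((A : ℝ≥0∞) : EReal) = ((A.toReal : ℝ) : EReal) := by
      conv_lhs => rw [← ENNReal.ofReal_toReal hA_lt.ne]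
      rw [EReal.coe_ennreal_ofReal, max_eq_left ENNReal.toReal_nonneg]
    have hBe : ((B : ℝ≥0∞) : EReal) = ((B.toReal : ℝ) : EReal) := by
      conv_lhs => rw [← ENNReal.ofReal_toReal hB]
      rw [EReal.coe_ennreal_ofReal, max_eq_left ENNReal.toReal_nonneg]
    rw [hAe, hBe, ← EReal.coe_sub, EReal.coe_le_coe_iff, ← hint]
    -- the real inequality
    have hkey : ∀ x, (a - 1) * φ x ≤ f x * Real.log H - f x + f x ^ a / H := fun x =>
      log_holder_key_pt ha hH_pos (hf_nonneg x)
    have hrhs_int : Integrable (fun x => f x * Real.log H - f x + f x ^ a / H) volume :=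
      ((hfI.mul_const _).sub hfI).add (hfa_int.div_const _)
    have hmono : ∫ x, (a - 1) * φ x ≤ ∫ x, (f x * Real.log H - f x + f x ^ a / H) :=
      integral_mono (hφ_int.const_mul _) hrhs_int hkey
    rw [integral_const_mul] at hmono
    have hR : ∫ x, (f x * Real.log H - f x + f x ^ a / H) = Real.log H := by
      have h1 : Integrable (fun x => f x * Real.log H) volume := hfI.mul_const _
      have h2 : Integrable (fun x => f x * Real.log H - f x) volume := h1.sub hfI
      have h3 : Integrable (fun x => f x ^ a / H) volume := hfa_int.div_const _
      rw [integral_add h2 h3, integral_sub h1 hfI, integral_mul_const, integral_div]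
      have g2 : ∫ x, f x ^ a / H = 1 := by
        rw [integral_div, hfa_integral, div_self hH_pos.ne']
      rw [g2, ← hIp, div_self hIp_pos.ne']
      ring
    rw [hR] at hmono
    have hφle : ∫ x, φ x ≤ Real.log H / (a - 1) := by
      rw [le_div_iff₀ ha1, mul_comm]
      exact hmono
    refine hφle.trans (le_of_eq ?_)
    -- identify the right-hand sides
    have hlogH : Real.log H = Real.log Iq - a * Real.log Ip := by
      rw [hH_def, Real.log_div hIq_pos.ne' (Real.rpow_pos_of_pos hIp_pos a).ne',
        Real.log_rpow hIp_pos]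
    have hlogR : Real.log (Iq ^ (p / q) / Ip) = (p / q) * Real.log Iq - Real.log Ip := by
      rw [Real.log_div (Real.rpow_pos_of_pos hIq_pos _).ne' hIp_pos.ne',
        Real.log_rpow hIq_pos]
    rw [hlogH, hlogR, ha_def]
    have hqp : q - p ≠ 0 := by linarith
    field_simp
end

section
/- Let N ≥ 1, p > 1, and s ∈ ℝ with s > −N/p. Let a : ℝ^N × ℝ^N → [0,∞) be a measurable function, and define A(x) = ( (1/|B(0,|x|)|) ∫_{B(0,|x|)} a(x,y)^{1−p'} dy )^{1−p}. Then for every measurable u : ℝ^N → ℂ, ∫_{ℝ^N} ( A(x)/|x|^{sp} ) | u(x) − (1/|B(0,|x|)|) ∫_{B(0,|x|)} u(y) dy |^p dx ≤ 2^{N+sp} (N/|𝔖|) ∫_{ℝ^N} ∫_{ℝ^N} |u(x) − u(y)|^p / |x−y|^{N+sp} · a(x,y) dx dy. -/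
open MeasureTheory Metric ENNReal

/-- Hölder step: `(∫ f)^p ≤ (∫ f^p g) * (∫ g^{1-p'})^{p-1}`. -/
lemma holder_aux {α : Type*} [MeasurableSpace α] (μ : Measure α) {p p' : ℝ}
    (hpq : p.HolderConjugate p') (f g : α → ℝ≥0∞)
    (hf : AEMeasurable f μ) (hg : AEMeasurable g μ)
    (hg0 : ∀ᵐ y ∂μ, g y ≠ 0) (hgt : ∀ᵐ y ∂μ, g y ≠ ∞) :
    (∫⁻ y, f y ∂μ) ^ p ≤ (∫⁻ y, f y ^ p * g y ∂μ) * (∫⁻ y, g y ^ (1 - p') ∂μ) ^ (p - 1) := by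
  have hp0 : p ≠ 0 := hpq.pos.ne'
  have hp'0 : p' ≠ 0 := hpq.symm.pos.ne'
  have key : ∫⁻ y, f y ∂μ
      ≤ (∫⁻ y, f y ^ p * g y ∂μ) ^ (1/p) * (∫⁻ y, g y ^ (1 - p') ∂μ) ^ (1/p') := by
    have heq : ∫⁻ y, f y ∂μ
        = ∫⁻ y, ((fun y => (f y ^ p * g y) ^ (1/p)) * fun y => (g y ^ (1 - p')) ^ (1/p')) y ∂μ := by
      refine lintegral_congr_ae ?_
      filter_upwards [hg0, hgt] with y h0 ht
      simp only [Pi.mul_apply]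
      have e1 : p * (1/p) = 1 := mul_one_div_cancel hp0
      have e2 : 1/p + (1 - p') * (1/p') = 0 := by
        have h := hpq.inv_add_inv_eq_one
        field_simp at h ⊢
        linarith
      rw [ENNReal.mul_rpow_of_nonneg _ _ (one_div_pos.mpr hpq.pos).le,
        ← ENNReal.rpow_mul, ← ENNReal.rpow_mul, mul_assoc,
        ← ENNReal.rpow_add _ _ h0 ht, e1, e2, ENNReal.rpow_one, ENNReal.rpow_zero, mul_one]
    rw [heq]
    refine (ENNReal.lintegral_mul_le_Lp_mul_Lq μ hpq
      (((hf.pow_const p).mul hg).pow_const _) ((hg.pow_const _).pow_const _)).trans_eq ?_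
    simp only [Pi.mul_apply, ← ENNReal.rpow_mul, one_div_mul_cancel hp0, one_div_mul_cancel hp'0,
      ENNReal.rpow_one, mul_assoc, mul_one]
  calc (∫⁻ y, f y ∂μ) ^ p
      ≤ ((∫⁻ y, f y ^ p * g y ∂μ) ^ (1/p) * (∫⁻ y, g y ^ (1 - p') ∂μ) ^ (1/p')) ^ p :=
        ENNReal.rpow_le_rpow key hpq.pos.le
    _ = (∫⁻ y, f y ^ p * g y ∂μ) * (∫⁻ y, g y ^ (1 - p') ∂μ) ^ (p - 1) := by
        have e3 : 1/p' * p = p - 1 := by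
          have h := hpq.inv_add_inv_eq_one
          field_simp at h ⊢
          linarith
        rw [ENNReal.mul_rpow_of_nonneg _ _ hpq.pos.le, ← ENNReal.rpow_mul, ← ENNReal.rpow_mul,
          one_div_mul_cancel hp0, ENNReal.rpow_one, e3]

lemma avg_aux {α : Type*} [MeasurableSpace α] (μ : Measure α) (B : Set α)
    (hV0 : μ B ≠ 0) (hVt : μ B ≠ ∞) (u : α → ℂ) (hu : Measurable u) (c : ℂ) :
    ENNReal.ofReal ‖c - ((μ B).toReal)⁻¹ • ∫ y in B, u y ∂μ‖
      ≤ (μ B)⁻¹ * ∫⁻ y in B, ENNReal.ofReal ‖c - u y‖ ∂μ := by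
  have hVpos : 0 < (μ B).toReal := ENNReal.toReal_pos hV0 hVt
  by_cases hint : IntegrableOn u B μ
  · have hci : IntegrableOn (fun y => c - u y) B μ :=
      (integrableOn_const hVt).sub hint
    have key : c - ((μ B).toReal)⁻¹ • ∫ y in B, u y ∂μ
        = ((μ B).toReal)⁻¹ • ∫ y in B, (c - u y) ∂μ := by
      rw [integral_sub (integrableOn_const hVt : IntegrableOn (fun _ => c) B μ) hint,
        setIntegral_const, smul_sub, smul_smul, measureReal_def, inv_mul_cancel₀ hVpos.ne', one_smul]
    rw [key, norm_smul, norm_inv, Real.norm_eq_abs, abs_of_pos hVpos,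
      ENNReal.ofReal_mul (by positivity)]
    have h1 : ENNReal.ofReal ((μ B).toReal)⁻¹ = (μ B)⁻¹ := by
      rw [ENNReal.ofReal_inv_of_pos hVpos, ENNReal.ofReal_toReal hVt]
    rw [h1]
    refine mul_le_mul_right ?_ _
    calc ENNReal.ofReal ‖∫ y in B, (c - u y) ∂μ‖
        ≤ ENNReal.ofReal (∫ y in B, ‖c - u y‖ ∂μ) :=
          ENNReal.ofReal_le_ofReal (norm_integral_le_integral_norm _)
      _ = ∫⁻ y in B, ENNReal.ofReal ‖c - u y‖ ∂μ :=
          ofReal_integral_eq_lintegral_ofReal hci.norm (ae_of_all _ fun y => norm_nonneg _)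
  · have htop : ∫⁻ y in B, ENNReal.ofReal ‖c - u y‖ ∂μ = ∞ := by
      by_contra hfin
      apply hint
      have hmeas : AEStronglyMeasurable (fun y => c - u y) (μ.restrict B) :=
        (aestronglyMeasurable_const.sub hu.aestronglyMeasurable)
      have hcu : IntegrableOn (fun y => c - u y) B μ := by
        refine ⟨hmeas, ?_⟩
        rw [hasFiniteIntegral_iff_norm]
        simpa using lt_top_iff_ne_top.2 hfin
      have := (integrableOn_const hVt :
        IntegrableOn (fun _ => c) B μ).sub hcu
      have h2 : ((fun _ => c) - fun y => c - u y) = u := by funext y; simp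
      rwa [h2] at this
    rw [htop, ENNReal.mul_top (by simpa using hVt)]
    exact le_top

/-- the key intermediate estimate (bound on the term J₁) in the
proof of the fractional Hardy inequality, on ℝ^N (Euclidean case of homogeneous
Lie groups, Q = N, triangle constant C = 1).  Here S = |𝔖| is the surface
measure of the unit sphere, so that |B(0,r)| = S rᴺ / N. -/
theorem fractional_hardy_J1_estimate
    (N : ℕ) (hN : 1 ≤ N) (p p' s S : ℝ) (hp : 1 < p) (hs : -(N / p) < s)
    (hp' : p' = p / (p - 1))
    (hS : ENNReal.ofReal S = N * volume (ball (0 : EuclideanSpace ℝ (Fin N)) 1))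
    (a : EuclideanSpace ℝ (Fin N) → EuclideanSpace ℝ (Fin N) → ℝ)
    (ha_meas : Measurable (Function.uncurry a)) (ha_nonneg : ∀ x y, 0 ≤ a x y)
    (A : EuclideanSpace ℝ (Fin N) → ℝ≥0∞)
    (hA : ∀ x, A x = ((volume (ball (0 : EuclideanSpace ℝ (Fin N)) ‖x‖))⁻¹ *
        ∫⁻ y in ball (0 : EuclideanSpace ℝ (Fin N)) ‖x‖,
          ENNReal.ofReal (a x y) ^ (1 - p')) ^ (1 - p))
    (u : EuclideanSpace ℝ (Fin N) → ℂ) (hu : Measurable u) :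
    (∫⁻ x, A x / ENNReal.ofReal ‖x‖ ^ (s * p) *
        ENNReal.ofReal ‖u x -
          ((volume (ball (0 : EuclideanSpace ℝ (Fin N)) ‖x‖)).toReal)⁻¹ •
            ∫ y in ball (0 : EuclideanSpace ℝ (Fin N)) ‖x‖, u y‖ ^ p)
      ≤ ENNReal.ofReal ((2 : ℝ) ^ ((N : ℝ) + s * p) * ((N : ℝ) / S)) *
        ∫⁻ x, ∫⁻ y,
          ENNReal.ofReal ‖u x - u y‖ ^ p /
            ENNReal.ofReal ‖x - y‖ ^ ((N : ℝ) + s * p) *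
            ENNReal.ofReal (a x y) := by
  haveI : Nonempty (Fin N) := ⟨⟨0, hN⟩⟩
  haveI : Nontrivial (EuclideanSpace ℝ (Fin N)) := inferInstance
  have hp1 : (0:ℝ) < p := zero_lt_one.trans hp
  have hpq : p.HolderConjugate p' := (Real.holderConjugate_iff_eq_conjExponent hp).2 hp'
  have hp'1 : 1 < p' := (Real.holderConjugate_iff.1 (Real.HolderConjugate.symm hpq)).1
  have he : (0:ℝ) < (N:ℝ) + s * p := by
    have h1 : -((N:ℝ) / p) * p < s * p := mul_lt_mul_of_pos_right hs hp1
    rw [neg_mul, div_mul_cancel₀ _ hp1.ne'] at h1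
    have hN1 : (1:ℝ) ≤ (N:ℝ) := by exact_mod_cast hN
    linarith
  have hN0 : ((N:ℕ) : ℝ≥0∞) ≠ 0 := Nat.cast_ne_zero.2 (by omega)
  have hNt : ((N:ℕ) : ℝ≥0∞) ≠ ∞ := ENNReal.natCast_ne_top N
  have hvol1 : volume (ball (0 : EuclideanSpace ℝ (Fin N)) 1) ≠ 0 :=
    (measure_ball_pos _ _ one_pos).ne'
  have hSpos : (0:ℝ) < S := by
    by_contra h
    push_neg at h
    rw [ENNReal.ofReal_eq_zero.2 h] at hS
    exact hvol1 (by simpa [hN0] using hS.symm)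
  have hvol1_eq : volume (ball (0 : EuclideanSpace ℝ (Fin N)) 1)
      = ENNReal.ofReal S / N := by
    exact (ENNReal.eq_div_iff hN0 hNt).2 hS.symm
  set e : ℝ := (N:ℝ) + s * p with he_def
  have hc₀ : ENNReal.ofReal ((2:ℝ) ^ e * ((N:ℝ) / S))
      = ENNReal.ofReal 2 ^ e * (((N:ℕ) : ℝ≥0∞) / ENNReal.ofReal S) := by
    rw [ENNReal.ofReal_mul (by positivity), ← ENNReal.ofReal_rpow_of_pos two_pos,
      ENNReal.ofReal_div_of_pos hSpos, ENNReal.ofReal_natCast]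
  have h2e0 : ENNReal.ofReal 2 ^ e ≠ 0 :=
    (ENNReal.rpow_pos (ENNReal.ofReal_pos.2 two_pos) ENNReal.ofReal_ne_top).ne'
  have h2et : ENNReal.ofReal 2 ^ e ≠ ∞ :=
    ENNReal.rpow_ne_top_of_nonneg he.le ENNReal.ofReal_ne_top
  have hx0ae : ∀ᵐ (x : EuclideanSpace ℝ (Fin N)), x ≠ 0 := by
    rw [ae_iff]
    simpa using measure_singleton (0 : EuclideanSpace ℝ (Fin N))
  have hpt : ∀ᵐ (x : EuclideanSpace ℝ (Fin N)),
      A x / ENNReal.ofReal ‖x‖ ^ (s * p) *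
        ENNReal.ofReal ‖u x -
          ((volume (ball (0 : EuclideanSpace ℝ (Fin N)) ‖x‖)).toReal)⁻¹ •
            ∫ y in ball (0 : EuclideanSpace ℝ (Fin N)) ‖x‖, u y‖ ^ p
      ≤ ENNReal.ofReal ((2 : ℝ) ^ e * ((N : ℝ) / S)) *
          ∫⁻ y, ENNReal.ofReal ‖u x - u y‖ ^ p /
            ENNReal.ofReal ‖x - y‖ ^ e * ENNReal.ofReal (a x y) := by
    filter_upwards [hx0ae] with x hx
    have hr : (0:ℝ) < ‖x‖ := norm_pos_iff.2 hx
    have hor0 : ENNReal.ofReal ‖x‖ ≠ 0 := (ENNReal.ofReal_pos.2 hr).ne'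
    have hort : ENNReal.ofReal ‖x‖ ≠ ∞ := ENNReal.ofReal_ne_top
    set B : Set (EuclideanSpace ℝ (Fin N)) := ball 0 ‖x‖ with hB_def
    set V : ℝ≥0∞ := volume B with hV_def
    have hV0 : V ≠ 0 := (measure_ball_pos _ _ hr).ne'
    have hVt : V ≠ ∞ := measure_ball_lt_top.ne
    set T : ℝ≥0∞ := ENNReal.ofReal ‖x‖ ^ (s * p) with hT_def
    set L : ℝ≥0∞ := ∫⁻ y in B, ENNReal.ofReal ‖u x - u y‖ with hL_def
    set I : ℝ≥0∞ := ∫⁻ y in B, ENNReal.ofReal (a x y) ^ (1 - p') with hI_def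
    set J : ℝ≥0∞ := ∫⁻ y in B, ENNReal.ofReal ‖u x - u y‖ ^ p * ENNReal.ofReal (a x y)
      with hJ_def
    set K : ℝ≥0∞ := ∫⁻ y, ENNReal.ofReal ‖u x - u y‖ ^ p /
      ENNReal.ofReal ‖x - y‖ ^ e * ENNReal.ofReal (a x y) with hK_def
    -- step A
    have stepA : ENNReal.ofReal ‖u x - (V.toReal)⁻¹ • ∫ y in B, u y‖ ≤ V⁻¹ * L :=
      avg_aux volume B hV0 hVt u hu (u x)
    have mono1 : A x / T *
        ENNReal.ofReal ‖u x - (V.toReal)⁻¹ • ∫ y in B, u y‖ ^ p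
        ≤ A x / T * (V⁻¹ * L) ^ p :=
      mul_le_mul_right (ENNReal.rpow_le_rpow stepA hp1.le) _
    refine mono1.trans ?_
    by_cases hI_top : I = ∞
    · have hA0 : A x = 0 := by
        rw [hA x, ← hB_def, ← hV_def, ← hI_def, hI_top,
          ENNReal.mul_top (ENNReal.inv_ne_zero.2 hVt),
          ENNReal.top_rpow_of_neg (by linarith)]
      rw [hA0, ENNReal.zero_div, zero_mul]
      exact zero_le
    -- Hölder step
    have hgm : Measurable (fun y => ENNReal.ofReal (a x y)) :=
      ENNReal.measurable_ofReal.comp ha_meas.of_uncurry_left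
    have hfm : Measurable (fun y => ENNReal.ofReal ‖u x - u y‖) :=
      ENNReal.measurable_ofReal.comp ((measurable_const.sub hu).norm)
    have hg0ae : ∀ᵐ y ∂(volume.restrict B), ENNReal.ofReal (a x y) ≠ 0 := by
      have hae := ae_lt_top (hgm.pow_const (1 - p'))
        (by rw [← hI_def]; exact hI_top)
      filter_upwards [hae] with y hy h0
      rw [h0, ENNReal.zero_rpow_of_neg (by linarith)] at hy
      exact (lt_irrefl _ hy)
    have holder : L ^ p ≤ J * I ^ (p - 1) :=
      holder_aux (volume.restrict B) hpq _ _ hfm.aemeasurable hgm.aemeasurable hg0ae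
        (ae_of_all _ fun y => ENNReal.ofReal_ne_top)
    have hAI : A x * I ^ (p - 1) ≤ (V⁻¹) ^ (1 - p) := by
      rw [hA x, ← hB_def, ← hV_def, ← hI_def,
        ENNReal.mul_rpow_of_ne_top (ENNReal.inv_ne_top.2 hV0) hI_top]
      rcases eq_or_ne I 0 with h0 | h0
      · rw [h0, show ((0:ℝ≥0∞)) ^ (p - 1) = 0 from ENNReal.zero_rpow_of_pos (by linarith),
          mul_zero]
        exact zero_le
      · rw [mul_assoc, ← ENNReal.rpow_add _ _ h0 hI_top]
        have : (1 - p) + (p - 1) = 0 := by ring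
        rw [this, ENNReal.rpow_zero, mul_one]
    have hVinv : (V⁻¹) ^ (1 - p) * (V⁻¹) ^ p = V⁻¹ := by
      rw [← ENNReal.rpow_add _ _ (ENNReal.inv_ne_zero.2 hVt) (ENNReal.inv_ne_top.2 hV0)]
      rw [sub_add_cancel, ENNReal.rpow_one]
    have chain1 : A x / T * (V⁻¹ * L) ^ p ≤ V⁻¹ * T⁻¹ * J :=
      calc A x / T * (V⁻¹ * L) ^ p
          = A x * T⁻¹ * ((V⁻¹) ^ p * L ^ p) := by
            rw [div_eq_mul_inv, ENNReal.mul_rpow_of_nonneg _ _ hp1.le]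
        _ ≤ A x * T⁻¹ * ((V⁻¹) ^ p * (J * I ^ (p - 1))) := by
            exact mul_le_mul_right (mul_le_mul_right holder _) _
        _ = (A x * I ^ (p - 1)) * ((V⁻¹) ^ p * T⁻¹ * J) := by ring
        _ ≤ (V⁻¹) ^ (1 - p) * ((V⁻¹) ^ p * T⁻¹ * J) := mul_le_mul_left hAI _
        _ = ((V⁻¹) ^ (1 - p) * (V⁻¹) ^ p) * T⁻¹ * J := by ring
        _ = V⁻¹ * T⁻¹ * J := by rw [hVinv]
    refine chain1.trans ?_
    -- compute V⁻¹ * T⁻¹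
    have hVval : V = ENNReal.ofReal ‖x‖ ^ ((N:ℕ):ℝ) * (ENNReal.ofReal S / N) := by
      rw [hV_def, hB_def, Measure.addHaar_ball _ _ hr.le, hvol1_eq,
        finrank_euclideanSpace_fin, ← Real.rpow_natCast ‖x‖ N,
        ← ENNReal.ofReal_rpow_of_pos hr]
    have hVTinv : V⁻¹ * T⁻¹ = ENNReal.ofReal ‖x‖ ^ (-e) * (((N:ℕ):ℝ≥0∞) / ENNReal.ofReal S) := by
      rw [hVval, ENNReal.mul_inv (Or.inl (ENNReal.rpow_pos (ENNReal.ofReal_pos.2 hr)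
          hort).ne') (Or.inl (ENNReal.rpow_ne_top_of_nonneg (by positivity) hort)),
        ENNReal.inv_div (Or.inr ENNReal.ofReal_ne_top) (Or.inr (ENNReal.ofReal_pos.2 hSpos).ne'),
        hT_def, ← ENNReal.rpow_neg, ← ENNReal.rpow_neg, mul_assoc, mul_comm _ (ENNReal.ofReal ‖x‖ ^ (-(s*p))),
        ← mul_assoc, ← ENNReal.rpow_add _ _ hor0 hort]
      rw [he_def]
      ring_nf
    -- pointwise inequality in y
    have hptwise : ∀ y ∈ B, ENNReal.ofReal ‖x‖ ^ (-e) *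
        (ENNReal.ofReal ‖u x - u y‖ ^ p * ENNReal.ofReal (a x y))
        ≤ ENNReal.ofReal 2 ^ e *
          (ENNReal.ofReal ‖u x - u y‖ ^ p / ENNReal.ofReal ‖x - y‖ ^ e *
            ENNReal.ofReal (a x y)) := by
      intro y hy
      have hxy : ‖x - y‖ ≤ 2 * ‖x‖ := by
        have hy' : ‖y‖ < ‖x‖ := mem_ball_zero_iff.1 hy
        calc ‖x - y‖ ≤ ‖x‖ + ‖y‖ := norm_sub_le _ _
          _ ≤ 2 * ‖x‖ := by linarith
      have hb_le : ENNReal.ofReal ‖x - y‖ ^ e ≤ ENNReal.ofReal 2 ^ e * ENNReal.ofReal ‖x‖ ^ e := by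
        calc ENNReal.ofReal ‖x - y‖ ^ e ≤ ENNReal.ofReal (2 * ‖x‖) ^ e :=
            ENNReal.rpow_le_rpow (ENNReal.ofReal_le_ofReal hxy) he.le
          _ = ENNReal.ofReal 2 ^ e * ENNReal.ofReal ‖x‖ ^ e := by
            rw [ENNReal.ofReal_mul (by norm_num), ENNReal.mul_rpow_of_nonneg _ _ he.le]
      have hkey : ENNReal.ofReal ‖x‖ ^ (-e) ≤ ENNReal.ofReal 2 ^ e / ENNReal.ofReal ‖x - y‖ ^ e := by
        rw [ENNReal.le_div_iff_mul_le (Or.inr h2e0)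
          (Or.inl (ENNReal.rpow_ne_top_of_nonneg he.le ENNReal.ofReal_ne_top))]
        calc ENNReal.ofReal ‖x‖ ^ (-e) * ENNReal.ofReal ‖x - y‖ ^ e
            ≤ ENNReal.ofReal ‖x‖ ^ (-e) * (ENNReal.ofReal 2 ^ e * ENNReal.ofReal ‖x‖ ^ e) :=
              mul_le_mul_right hb_le _
          _ = ENNReal.ofReal 2 ^ e * (ENNReal.ofReal ‖x‖ ^ (-e) * ENNReal.ofReal ‖x‖ ^ e) := by
              ring
          _ = ENNReal.ofReal 2 ^ e := by
              rw [← ENNReal.rpow_add _ _ hor0 hort, neg_add_cancel, ENNReal.rpow_zero, mul_one]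
      calc ENNReal.ofReal ‖x‖ ^ (-e) *
          (ENNReal.ofReal ‖u x - u y‖ ^ p * ENNReal.ofReal (a x y))
          ≤ (ENNReal.ofReal 2 ^ e / ENNReal.ofReal ‖x - y‖ ^ e) *
            (ENNReal.ofReal ‖u x - u y‖ ^ p * ENNReal.ofReal (a x y)) :=
            mul_le_mul_left hkey _
        _ = ENNReal.ofReal 2 ^ e *
            (ENNReal.ofReal ‖u x - u y‖ ^ p / ENNReal.ofReal ‖x - y‖ ^ e *
              ENNReal.ofReal (a x y)) := by
            rw [div_eq_mul_inv, div_eq_mul_inv]; ring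
    calc V⁻¹ * T⁻¹ * J
        = (((N:ℕ):ℝ≥0∞) / ENNReal.ofReal S) *
          ∫⁻ y in B, ENNReal.ofReal ‖x‖ ^ (-e) *
            (ENNReal.ofReal ‖u x - u y‖ ^ p * ENNReal.ofReal (a x y)) := by
          have hnegE : ENNReal.ofReal ‖x‖ ^ (-e) ≠ ∞ := by
            rw [ENNReal.rpow_neg]
            exact ENNReal.inv_ne_top.2 (ENNReal.rpow_pos (ENNReal.ofReal_pos.2 hr) hort).ne'
          rw [hVTinv, hJ_def, lintegral_const_mul' _ _ hnegE]
          ring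
      _ ≤ (((N:ℕ):ℝ≥0∞) / ENNReal.ofReal S) *
          ∫⁻ y in B, ENNReal.ofReal 2 ^ e *
            (ENNReal.ofReal ‖u x - u y‖ ^ p / ENNReal.ofReal ‖x - y‖ ^ e *
              ENNReal.ofReal (a x y)) := by
          have hxymeas : Measurable fun y : EuclideanSpace ℝ (Fin N) =>
              ENNReal.ofReal ‖x - y‖ :=
            ENNReal.measurable_ofReal.comp ((measurable_const.sub measurable_id).norm)
          exact mul_le_mul_right (setLIntegral_mono
            (measurable_const.mul (((hfm.pow_const p).div (hxymeas.pow_const e)).mul hgm))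
            hptwise) _
      _ ≤ (((N:ℕ):ℝ≥0∞) / ENNReal.ofReal S) *
          ∫⁻ y, ENNReal.ofReal 2 ^ e *
            (ENNReal.ofReal ‖u x - u y‖ ^ p / ENNReal.ofReal ‖x - y‖ ^ e *
              ENNReal.ofReal (a x y)) :=
          mul_le_mul_right (setLIntegral_le_lintegral _ _) _
      _ = ENNReal.ofReal ((2:ℝ) ^ e * ((N:ℝ) / S)) * K := by
          rw [hK_def, lintegral_const_mul' _ _ h2et, hc₀]
          ring
  calc (∫⁻ x, A x / ENNReal.ofReal ‖x‖ ^ (s * p) *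
        ENNReal.ofReal ‖u x -
          ((volume (ball (0 : EuclideanSpace ℝ (Fin N)) ‖x‖)).toReal)⁻¹ •
            ∫ y in ball (0 : EuclideanSpace ℝ (Fin N)) ‖x‖, u y‖ ^ p)
      ≤ ∫⁻ x, ENNReal.ofReal ((2 : ℝ) ^ e * ((N : ℝ) / S)) *
          ∫⁻ y, ENNReal.ofReal ‖u x - u y‖ ^ p /
            ENNReal.ofReal ‖x - y‖ ^ e * ENNReal.ofReal (a x y) :=
        lintegral_mono_ae hpt
    _ = ENNReal.ofReal ((2 : ℝ) ^ e * ((N : ℝ) / S)) *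
        ∫⁻ x, ∫⁻ y, ENNReal.ofReal ‖u x - u y‖ ^ p /
          ENNReal.ofReal ‖x - y‖ ^ e * ENNReal.ofReal (a x y) :=
        lintegral_const_mul' _ _ ENNReal.ofReal_ne_top
end
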